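/- Let K be a field of characteristic not 2 containing a primitive 4th root of unity, and let L = K(√a₁, ..., √a_r) be a (ℤ/2)^r-Galois extension of K, where a₁, ..., a_r ∈ K*. Then the trace form q_{L/K}(x) = Tr_{L/K}(x²) is isometric to ⟨2^r⟩ ⊗ ⟨⟨a₁, ..., a_r⟩⟩, where ⟨⟨a₁,...,a_r⟩⟩ = ⊗ᵢ ⟨1, aᵢ⟩ is the r-fold Pfister form (note ⟨1,-a⟩ ≅ ⟨1,a⟩ since -1 is a square). -/

import Mathlib

open QuadraticMap

/-- Let `K` be a field of characteristic `≠ 2` containing a primitive 4th root of unity,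
and let `L = K(√a₁, …, √a_r)` be a `(ℤ/2)^r`-Galois extension of `K` (so `[L : K] = 2^r`
and every `K`-automorphism of `L` has order dividing 2).  Then the trace form
`x ↦ Tr_{L/K}(x²)` is isometric to `⟨2^r⟩ ⊗ ⟨⟨a₁, …, a_r⟩⟩`, the diagonal form whose
coefficients are `2^r · ∏_{i ∈ ε} aᵢ` for `ε ⊆ {1, …, r}` (note `⟨1, -a⟩ ≅ ⟨1, a⟩` since
`-1` is a square). -/
theorem traceForm_multiquadratic {K L : Type*} [Field K] [Field L] [Algebra K L]
    (h2 : (2 : K) ≠ 0) (hζ : ∃ ζ : K, ζ ^ 2 = -1)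
    (r : ℕ) (a : Fin r → K) (ha : ∀ i, a i ≠ 0) (b : Fin r → L)
    (hb : ∀ i, b i ^ 2 = algebraMap K L (a i))
    (hgen : Algebra.adjoin K (Set.range b) = ⊤)
    [IsGalois K L] (hdim : Module.finrank K L = 2 ^ r)
    (hexp : ∀ σ : L ≃ₐ[K] L, σ ^ 2 = 1) :
    QuadraticMap.Equivalent
      ((Algebra.traceForm K L).toQuadraticMap)
      (QuadraticMap.weightedSumSquares K
        (fun ε : Fin r → Bool => (2 ^ r : K) * ∏ i, if ε i then a i else 1)) := by
  classical
  have hinj : Function.Injective (algebraMap K L) := (algebraMap K L).injective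
  have halg2 : algebraMap K L 2 = 2 := map_ofNat _ 2
  have h2L : (2 : L) ≠ 0 := by
    rw [← halg2]
    intro h
    exact h2 (hinj (by rw [h, map_zero]))
  have hfd : FiniteDimensional K L := FiniteDimensional.of_finrank_pos (by
    rw [hdim]; positivity)
  have hbne : ∀ i, b i ≠ 0 := by
    intro i h
    apply ha i
    apply hinj
    rw [map_zero, ← hb i, h, zero_pow two_ne_zero]
  -- each automorphism sends `b i` to `± b i`
  have hsb : ∀ (σ : L ≃ₐ[K] L) (i : Fin r), σ (b i) = b i ∨ σ (b i) = -b i := by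
    intro σ i
    have h : σ (b i) * σ (b i) = b i * b i := by
      rw [← pow_two, ← pow_two, ← map_pow, hb, AlgEquiv.commutes]
    exact mul_self_eq_mul_self_iff.mp h
  -- sign of σ on b i
  set sgn : (L ≃ₐ[K] L) → Fin r → L := fun σ i => if σ (b i) = b i then 1 else -1 with hsgn_def
  have hsgn_spec : ∀ σ i, σ (b i) = sgn σ i * b i := by
    intro σ i
    show σ (b i) = (if σ (b i) = b i then (1 : L) else -1) * b i
    by_cases h : σ (b i) = b i
    · rw [if_pos h, one_mul]; exact h
    · rcases hsb σ i with h' | h'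
      · exact absurd h' h
      · rw [if_neg h, h']; ring
  have hsgn_cases : ∀ σ i, sgn σ i = 1 ∨ sgn σ i = -1 := by
    intro σ i
    by_cases h : σ (b i) = b i <;> simp [hsgn_def, h]
  have hsgn_mul : ∀ σ τ i, sgn (σ * τ) i = sgn σ i * sgn τ i := by
    intro σ τ i
    have h1 : (σ * τ) (b i) = σ (τ (b i)) := rfl
    have h2' : σ (τ (b i)) = sgn τ i * sgn σ i * b i := by
      rw [hsgn_spec τ i]
      rcases hsgn_cases τ i with h | h <;>
        simp [h, hsgn_spec σ i, mul_comm, mul_assoc, mul_left_comm]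
    have := hsgn_spec (σ * τ) i
    rw [h1, h2'] at this
    have h3 := mul_right_cancel₀ (hbne i) this
    rw [← h3, mul_comm]
  -- the sign character map is bijective
  set e : (L ≃ₐ[K] L) → (Fin r → Bool) := fun σ i => if σ (b i) = b i then false else true
    with he_def
  have hext : ∀ σ τ : L ≃ₐ[K] L, (∀ i, σ (b i) = τ (b i)) → σ = τ := by
    intro σ τ h
    ext x
    have hx : x ∈ Algebra.adjoin K (Set.range b) := hgen ▸ trivial
    induction hx using Algebra.adjoin_induction with
    | mem y hy => obtain ⟨i, rfl⟩ := hy; exact h i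
    | algebraMap r => simp
    | add x y _ _ hx hy => simp [hx, hy]
    | mul x y _ _ hx hy => simp [hx, hy]
  have he_inj : Function.Injective e := by
    intro σ τ h
    apply hext
    intro i
    have hi := congrFun h i
    by_cases h1 : σ (b i) = b i <;> by_cases h2' : τ (b i) = b i
    · rw [h1, h2']
    · exfalso; simp [he_def, h1, h2'] at hi
    · exfalso; simp [he_def, h1, h2'] at hi
    · rcases hsb σ i with h' | h' <;> rcases hsb τ i with h'' | h''
      · exact absurd h' h1
      · exact absurd h' h1
      · exact absurd h'' h2'
      · rw [h', h'']
  have hcard : Fintype.card (L ≃ₐ[K] L) = Fintype.card (Fin r → Bool) := by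
    rw [← Nat.card_eq_fintype_card, IsGalois.card_aut_eq_finrank, hdim, Fintype.card_fun, Fintype.card_bool,
      Fintype.card_fin]
  have he_surj : Function.Surjective e :=
    ((Fintype.bijective_iff_injective_and_card e).mpr ⟨he_inj, hcard⟩).2
  -- the orthogonal family
  set v : (Fin r → Bool) → L := fun ε => ∏ i, if ε i then b i else 1 with hv_def
  set c : (L ≃ₐ[K] L) → (Fin r → Bool) → L :=
    fun σ η => ∏ i, if η i then sgn σ i else 1 with hc_def
  have hσv : ∀ σ η, σ (v η) = c σ η * v η := by
    intro σ η
    rw [hv_def, map_prod, ← Finset.prod_mul_distrib]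
    refine Finset.prod_congr rfl fun i _ => ?_
    by_cases h : η i <;> simp [h, hsgn_spec σ i]
  have hc_mul : ∀ σ τ η, c (σ * τ) η = c σ η * c τ η := by
    intro σ τ η
    rw [hc_def, ← Finset.prod_mul_distrib]
    refine Finset.prod_congr rfl fun i _ => ?_
    by_cases h : η i <;> simp [h, hsgn_mul]
  -- trace of v η vanishes for η ≠ 0
  have htrv : ∀ η : Fin r → Bool, η ≠ (fun _ => false) → Algebra.trace K L (v η) = 0 := by
    intro η hη
    have : ∃ i0, η i0 = true := by
      by_contra h
      push_neg at h
      exact hη (funext fun i => by simpa using h i)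
    obtain ⟨i0, hi0⟩ := this
    obtain ⟨σ0, hσ0⟩ := he_surj (fun i => if i = i0 then true else false)
    have hsgn0 : ∀ i, sgn σ0 i = if i = i0 then -1 else 1 := by
      intro i
      have hi := congrFun hσ0 i
      show (if σ0 (b i) = b i then (1 : L) else -1) = if i = i0 then -1 else 1
      by_cases h' : i = i0
      · rw [if_pos h'] at hi ⊢
        by_cases h1 : σ0 (b i) = b i
        · exfalso; simp [he_def, h1] at hi
        · rw [if_neg h1]
      · rw [if_neg h'] at hi ⊢
        by_cases h1 : σ0 (b i) = b i
        · rw [if_pos h1]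
        · exfalso; simp [he_def, h1] at hi
    have hcσ0 : c σ0 η = -1 := by
      show (∏ i : Fin r, if η i = true then sgn σ0 i else 1) = (-1 : L)
      have : ∀ i ∈ Finset.univ, (if η i then sgn σ0 i else 1) =
          if i = i0 then (-1 : L) else 1 := by
        intro i _
        rw [hsgn0 i]
        by_cases h' : i = i0
        · subst h'; simp [hi0]
        · simp [h']
      rw [Finset.prod_congr rfl this, Finset.prod_ite_eq' Finset.univ i0 (fun _ => (-1 : L))]
      simp
    set S : L := ∑ σ : L ≃ₐ[K] L, c σ η with hS_def
    have hre : ∑ σ : L ≃ₐ[K] L, c σ η = ∑ σ : L ≃ₐ[K] L, c (σ0 * σ) η :=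
      (Fintype.sum_bijective (fun σ => σ0 * σ) (Group.mulLeft_bijective σ0)
        (fun σ => c (σ0 * σ) η) (fun σ => c σ η) (fun σ => rfl)).symm
    have hSneg : S = -S := by
      rw [hS_def]
      nth_rewrite 1 [hre]
      have hterm : ∀ σ : L ≃ₐ[K] L, c (σ0 * σ) η = - c σ η := fun σ => by
        rw [hc_mul, hcσ0, neg_one_mul]
      rw [Finset.sum_congr rfl (fun σ _ => hterm σ), Finset.sum_neg_distrib]
    have hS0 : S = 0 := by
      have h' : S + S = 0 := by nth_rewrite 2 [hSneg]; ring
      have : (2 : L) * S = 0 := by rw [two_mul]; exact h'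
      rcases mul_eq_zero.mp this with h | h
      · exact absurd h h2L
      · exact h
    apply hinj
    rw [map_zero, trace_eq_sum_automorphisms]
    simp only [hσv]
    rw [← Finset.sum_mul, ← hS_def, hS0, zero_mul]
  -- product formula
  have hmul : ∀ ε δ : Fin r → Bool, v ε * v δ =
      algebraMap K L (∏ i, if ε i && δ i then a i else 1) * v (fun i => xor (ε i) (δ i)) := by
    intro ε δ
    rw [hv_def, map_prod, ← Finset.prod_mul_distrib, ← Finset.prod_mul_distrib]
    refine Finset.prod_congr rfl fun i _ => ?_
    cases hε : ε i <;> cases hδ : δ i <;>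
      simp [hε, hδ, ← hb i, pow_two]
  have hdiagK : ∀ ε : Fin r → Bool,
      Algebra.trace K L (v ε * v ε) = (2 ^ r : K) * ∏ i, if ε i then a i else 1 := by
    intro ε
    rw [hmul ε ε]
    have h1 : (fun i => xor (ε i) (ε i)) = fun _ => false := funext fun i => by
      cases ε i <;> rfl
    have h2' : v (fun _ => false) = 1 := by simp [hv_def]
    rw [h1, h2', mul_one, Algebra.trace_algebraMap, hdim]
    rw [nsmul_eq_mul]
    push_cast
    congr 1
    refine Finset.prod_congr rfl fun i _ => ?_
    cases h : ε i <;> simp [h]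
  have hortho : (Algebra.traceForm K L).IsOrthoᵢ v := by
    intro ε δ hne
    have hρ : (fun i => xor (ε i) (δ i)) ≠ (fun _ => false) := by
      intro h
      apply hne
      funext i
      have hxy := congrFun h i
      revert hxy
      cases ε i <;> cases δ i <;> decide
    show Algebra.traceForm K L (v ε) (v δ) = 0
    rw [Algebra.traceForm_apply, hmul, ← Algebra.smul_def, _root_.map_smul,
      htrv _ hρ, smul_zero]
  have hdiag_ne : ∀ ε : Fin r → Bool, Algebra.traceForm K L (v ε) (v ε) ≠ 0 := by
    intro ε
    rw [Algebra.traceForm_apply, hdiagK]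
    apply mul_ne_zero (pow_ne_zero _ h2)
    rw [Finset.prod_ne_zero_iff]
    intro i _
    cases h : ε i <;> simp [h, ha i]
  have hli : LinearIndependent K v :=
    LinearMap.BilinForm.linearIndependent_of_iIsOrtho hortho hdiag_ne
  have hcard' : Fintype.card (Fin r → Bool) = Module.finrank K L := by
    rw [hdim, Fintype.card_fun, Fintype.card_bool, Fintype.card_fin]
  let bas : Module.Basis (Fin r → Bool) K L := basisOfLinearIndependentOfCardEqFinrank hli hcard'
  have hbas : ⇑bas = v := coe_basisOfLinearIndependentOfCardEqFinrank hli hcard'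
  letI : Invertible (2 : K) := invertibleOfNonzero h2
  set Q : QuadraticForm K L := (Algebra.traceForm K L).toQuadraticMap with hQ_def
  have hassoc : associated (R := K) Q = Algebra.traceForm K L :=
    QuadraticMap.associated_left_inverse (S := K) (Algebra.traceForm_isSymm (R := K) (S := L)).eq
  have horthoQ : (associated (R := K) Q).IsOrthoᵢ bas := by
    rw [hassoc, hbas]; exact hortho
  have heq : Q.basisRepr bas = QuadraticMap.weightedSumSquares K
      (fun ε : Fin r → Bool => (2 ^ r : K) * ∏ i, if ε i then a i else 1) := by
    rw [QuadraticMap.basisRepr_eq_of_iIsOrtho Q bas horthoQ]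
    congr 1
    funext ε
    rw [hbas]
    show Algebra.traceForm K L (v ε) (v ε) = _
    rw [Algebra.traceForm_apply, hdiagK]
  exact ⟨heq ▸ Q.isometryEquivBasisRepr bas⟩
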